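/- For all n ≥ d ≥ 1, J^ℚ(d+4, n+4) ⊆ J^ℚ(d, n): if there exist d+4 pairwise orthogonal vectors in ℚ^{n+4} each of squared length m, then there exist d pairwise orthogonal vectors in ℚⁿ each of squared length m. -/

import Mathlib

namespace Stmt11

open Finset

def dd {N : ℕ} (x y : Fin N → ℚ) : ℚ := ∑ k, x k * y k

lemma dd_comm {N} (x y : Fin N → ℚ) : dd x y = dd y x :=
  Finset.sum_congr rfl fun k _ => mul_comm _ _

lemma dd_add_left {N} (x y z : Fin N → ℚ) : dd (x + y) z = dd x z + dd y z := by
  unfold dd; rw [← Finset.sum_add_distrib]; exact Finset.sum_congr rfl fun k _ => by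
    simp [add_mul]

lemma dd_add_right {N} (x y z : Fin N → ℚ) : dd z (x + y) = dd z x + dd z y := by
  rw [dd_comm, dd_add_left, dd_comm x z, dd_comm y z]

lemma dd_sub_left {N} (x y z : Fin N → ℚ) : dd (x - y) z = dd x z - dd y z := by
  unfold dd; rw [← Finset.sum_sub_distrib]; exact Finset.sum_congr rfl fun k _ => by
    simp [sub_mul]

lemma dd_sub_right {N} (x y z : Fin N → ℚ) : dd z (x - y) = dd z x - dd z y := by
  rw [dd_comm, dd_sub_left, dd_comm x z, dd_comm y z]

lemma dd_smul_left {N} (a : ℚ) (x z : Fin N → ℚ) : dd (a • x) z = a * dd x z := by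
  unfold dd; rw [Finset.mul_sum]; exact Finset.sum_congr rfl fun k _ => by
    simp [mul_assoc]

lemma dd_smul_right {N} (a : ℚ) (x z : Fin N → ℚ) : dd z (a • x) = a * dd z x := by
  rw [dd_comm, dd_smul_left, dd_comm x z]

lemma dd_neg_left {N} (x z : Fin N → ℚ) : dd (-x) z = - dd x z := by
  unfold dd; rw [← Finset.sum_neg_distrib]; exact Finset.sum_congr rfl fun k _ => by
    simp

lemma dd_sum_left {N : ℕ} {ι : Type*} (s : Finset ι) (f : ι → Fin N → ℚ) (z : Fin N → ℚ) :
    dd (∑ i ∈ s, f i) z = ∑ i ∈ s, dd (f i) z := by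
  classical
  induction s using Finset.induction with
  | empty => simp [dd]
  | insert _ _ h ih => rw [Finset.sum_insert h, Finset.sum_insert h, dd_add_left, ih]

lemma dd_sum_right {N : ℕ} {ι : Type*} (s : Finset ι) (f : ι → Fin N → ℚ) (z : Fin N → ℚ) :
    dd z (∑ i ∈ s, f i) = ∑ i ∈ s, dd z (f i) := by
  rw [dd_comm, dd_sum_left]; exact Finset.sum_congr rfl fun i _ => dd_comm _ _

lemma dd_single {N} (x : Fin N → ℚ) (k : Fin N) :
    dd x (fun j => if j = k then 1 else 0) = x k := by
  simp [dd, mul_ite]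

/-- reflection in the hyperplane orthogonal to u -/
def rf {N : ℕ} (u x : Fin N → ℚ) : Fin N → ℚ := x - (2 * dd x u / dd u u) • u

lemma rf_dd {N} (u : Fin N → ℚ) (hu : dd u u ≠ 0) (x y : Fin N → ℚ) :
    dd (rf u x) (rf u y) = dd x y := by
  unfold rf
  rw [dd_sub_left, dd_sub_right, dd_sub_right, dd_smul_left, dd_smul_right, dd_smul_right,
    dd_smul_left, dd_comm u y]
  field_simp
  ring


lemma cancel {k : ℕ} (v : Fin (k+1) → Fin (k+1) → ℚ)
    (horth : ∀ i j, i ≠ j → dd (v i) (v j) = 0) (h0 : dd (v 0) (v 0) = 1) :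
    ∃ w : Fin k → Fin k → ℚ, ∀ i j, dd (w i) (w j) = dd (v i.succ) (v j.succ) := by
  set e : Fin (k+1) → ℚ := fun j => if j = 0 then 1 else 0 with he
  have hxe : ∀ x : Fin (k+1) → ℚ, dd x e = x 0 := fun x => dd_single x 0
  have hee : dd e e = 1 := by rw [hxe]; simp [he]
  have key : ∃ T : (Fin (k+1) → ℚ) → (Fin (k+1) → ℚ),
      (∀ x y, dd (T x) (T y) = dd x y) ∧ T (v 0) = e := by
    by_cases hc : dd (v 0) e = 1
    · -- u = v 0 + e
      have h1 : dd (v 0) (v 0 + e) = 2 := by rw [dd_add_right, h0, hc]; norm_num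
      have h2 : dd (v 0 + e) (v 0 + e) = 4 := by
        rw [dd_add_left, dd_add_right, dd_add_right, h0, hee, dd_comm e (v 0), hc]; norm_num
      refine ⟨fun x => rf e (rf (v 0 + e) x), fun x y => ?_, ?_⟩
      · rw [rf_dd e (by rw [hee]; norm_num), rf_dd _ (by rw [h2]; norm_num)]
      · have hr1 : rf (v 0 + e) (v 0) = -e := by
          unfold rf
          rw [h1, h2]
          norm_num
        show rf e (rf (v 0 + e) (v 0)) = e
        rw [hr1]
        unfold rf
        have he0 : e 0 = 1 := by simp [he]
        rw [dd_neg_left, hxe, he0]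
        funext j
        simp [he]
        split <;> norm_num
    · have h1 : dd (v 0) (v 0 - e) = 1 - dd (v 0) e := by rw [dd_sub_right, h0]
      have h2 : dd (v 0 - e) (v 0 - e) = 2 - 2 * dd (v 0) e := by
        rw [dd_sub_left, dd_sub_right, dd_sub_right, h0, hee, dd_comm e (v 0)]; ring
      have h2' : dd (v 0 - e) (v 0 - e) ≠ 0 := by
        rw [h2]; intro hcon; apply hc; linarith
      refine ⟨rf (v 0 - e), fun x y => rf_dd _ h2' x y, ?_⟩
      unfold rf
      rw [h1, h2]
      have hco : 2 * (1 - dd (v 0) e) / (2 - 2 * dd (v 0) e) = 1 := by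
        rw [div_eq_one_iff_eq (by intro hcon; apply hc; linarith)]; ring
      rw [hco, one_smul, sub_sub_cancel]
  obtain ⟨T, hT, hT0⟩ := key
  have hfirst : ∀ i : Fin k, T (v i.succ) 0 = 0 := by
    intro i
    have h1 : dd (T (v i.succ)) e = 0 := by
      rw [← hT0, hT]; exact horth _ _ (Fin.succ_ne_zero i)
    rwa [hxe] at h1
  refine ⟨fun i => fun j => T (v i.succ) j.succ, fun i j => ?_⟩
  show dd (fun j' => T (v i.succ) j'.succ) (fun j' => T (v j.succ) j'.succ) = _
  rw [← hT (v i.succ) (v j.succ)]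
  unfold dd
  rw [Fin.sum_univ_succ, hfirst i, zero_mul, zero_add]


lemma extend_step {N r : ℕ} (hrN : r < N) (v : Fin r → Fin N → ℚ)
    (horth : ∀ i j, i ≠ j → dd (v i) (v j) = 0)
    (hnorm : ∀ i, dd (v i) (v i) ≠ 0) :
    ∃ y : Fin N → ℚ, (∀ i, dd (v i) y = 0) ∧ dd y y ≠ 0 := by
  by_contra hcon
  push_neg at hcon
  have hker2 : ∀ y z, (∀ i, dd (v i) y = 0) → (∀ i, dd (v i) z = 0) → dd y z = 0 := by
    intro y z hy hz
    have h1 := hcon (y + z) (fun i => by rw [dd_add_right, hy, hz, add_zero])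
    have h2 := hcon y hy
    have h3 := hcon z hz
    have e1 : dd (y+z) (y+z) = dd y y + dd y z + (dd z y + dd z z) := by
      rw [dd_add_left, dd_add_right, dd_add_right]
    rw [h1, h2, h3, dd_comm z y] at e1
    linarith
  have hker0 : ∀ y, (∀ i, dd (v i) y = 0) → y = 0 := by
    intro y hy
    have hx : ∀ x, dd y x = 0 := by
      intro x
      set rem := x - ∑ i, (dd x (v i) / dd (v i) (v i)) • v i with hrem
      have hrm : ∀ j, dd (v j) rem = 0 := by
        intro j
        rw [hrem, dd_sub_right, dd_sum_right]
        rw [Finset.sum_eq_single j]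
        · rw [dd_smul_right, dd_comm x (v j), div_mul_cancel₀ _ (hnorm j), sub_self]
        · intro j' _ hj'
          rw [dd_smul_right, horth j j' (Ne.symm hj'), mul_zero]
        · intro hj; exact absurd (Finset.mem_univ j) hj
      have hyr : dd y rem = 0 := hker2 y rem hy hrm
      have hx2 : x = rem + ∑ i, (dd x (v i) / dd (v i) (v i)) • v i := by
        rw [hrem, sub_add_cancel]
      rw [hx2, dd_add_right, hyr, dd_sum_right, zero_add]
      apply Finset.sum_eq_zero
      intro i _
      rw [dd_smul_right, dd_comm y (v i), hy i, mul_zero]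
    funext j
    have := hx (fun j' => if j' = j then 1 else 0)
    rw [dd_single] at this
    simpa using this
  have hinj : Function.Injective (Matrix.mulVecLin (Matrix.of v)) := by
    rw [← LinearMap.ker_eq_bot, LinearMap.ker_eq_bot']
    intro x hx
    apply hker0
    intro i
    have h := congrFun hx i
    simpa [dd, Matrix.mulVecLin_apply, Matrix.mulVec, dotProduct] using h
  have hle := LinearMap.finrank_le_finrank_of_injective hinj
  rw [Module.finrank_pi, Module.finrank_pi] at hle
  simp [Fintype.card_fin] at hle
  omega

lemma complete (N : ℕ) : ∀ j r, r + j = N → ∀ v : Fin r → Fin N → ℚ,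
    (∀ i i', i ≠ i' → dd (v i) (v i') = 0) → (∀ i, dd (v i) (v i) ≠ 0) →
    ∃ u : Fin N → Fin N → ℚ, (∀ i i', i ≠ i' → dd (u i) (u i') = 0) ∧
      (∀ i, dd (u i) (u i) ≠ 0) ∧ ∀ (i : Fin r) (hi : (i:ℕ) < N), u ⟨i, hi⟩ = v i := by
  intro j
  induction j with
  | zero =>
    intro r hr v hv1 hv2
    have hrN : r = N := by omega
    subst hrN
    refine ⟨v, hv1, hv2, fun i hi => ?_⟩
    congr 1
  | succ j ih =>
    intro r hr v hv1 hv2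
    have hrN : r < N := by omega
    obtain ⟨y, hy1, hy2⟩ := extend_step hrN v hv1 hv2
    set v' : Fin (r+1) → Fin N → ℚ := Fin.snoc v y with hv'
    have hsl : v' (Fin.last r) = y := Fin.snoc_last _ _
    have hsc : ∀ i : Fin r, v' i.castSucc = v i := fun i => Fin.snoc_castSucc _ _ _
    have horth' : ∀ i i', i ≠ i' → dd (v' i) (v' i') = 0 := by
      intro i i' hij
      rcases Fin.eq_castSucc_or_eq_last i with ⟨a, rfl⟩ | rfl <;>
        rcases Fin.eq_castSucc_or_eq_last i' with ⟨b, rfl⟩ | rfl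
      · rw [hsc, hsc]; exact hv1 a b (by simpa using hij)
      · rw [hsc, hsl]; exact hy1 a
      · rw [hsc, hsl, dd_comm]; exact hy1 b
      · exact absurd rfl hij
    have hnorm' : ∀ i, dd (v' i) (v' i) ≠ 0 := by
      intro i
      rcases Fin.eq_castSucc_or_eq_last i with ⟨a, rfl⟩ | rfl
      · rw [hsc]; exact hv2 a
      · rw [hsl]; exact hy2
    obtain ⟨u, hu1, hu2, hu3⟩ := ih (r+1) (by omega) v' horth' hnorm'
    refine ⟨u, hu1, hu2, fun i hi => ?_⟩
    have h4 := hu3 i.castSucc (by simpa using hi)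
    rw [hsc] at h4
    exact h4


lemma four_to_one {N : ℕ} (m : ℚ) (hm : m ≠ 0)
    (a b c d : ℚ) (habcd : a^2+b^2+c^2+d^2 = m)
    (v : Fin 4 → Fin N → ℚ) (horth : ∀ i j, i ≠ j → dd (v i) (v j) = 0)
    (hnorm : ∀ i, dd (v i) (v i) = m) :
    ∃ w : Fin 4 → Fin N → ℚ,
      (∀ i j, i ≠ j → dd (w i) (w j) = 0) ∧ (∀ i, dd (w i) (w i) = 1) ∧
      (∀ z, (∀ j, dd (v j) z = 0) → ∀ i, dd (w i) z = 0) := by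
  set Q : Fin 4 → Fin 4 → ℚ :=
    ![![a,b,c,d], ![-b,a,-d,c], ![-c,d,a,-b], ![-d,-c,b,a]] with hQ
  set w : Fin 4 → Fin N → ℚ := fun i => ∑ j, (Q i j / m) • v j with hw
  have key : ∀ i i' : Fin 4, dd (w i) (w i') = (∑ j, Q i j * Q i' j) / m := by
    intro i i'
    rw [hw]
    rw [dd_sum_left, Finset.sum_div]
    apply Finset.sum_congr rfl
    intro j _
    rw [dd_smul_left, dd_sum_right]
    rw [Finset.sum_eq_single j]
    · rw [dd_smul_right, hnorm]
      field_simp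
    · intro j' _ hj'
      simp [dd_smul_right, horth j j' (Ne.symm hj')]
    · intro hj; exact absurd (Finset.mem_univ j) hj
  have hQQ : ∀ i i' : Fin 4, ∑ j, Q i j * Q i' j = if i = i' then m else 0 := by
    intro i i'
    fin_cases i <;> fin_cases i' <;>
      simp [hQ, Fin.sum_univ_four] <;>
      first
        | linear_combination habcd
        | ring
  refine ⟨w, fun i j hij => ?_, fun i => ?_, fun z hz i => ?_⟩
  · rw [key, hQQ, if_neg hij, zero_div]
  · rw [key, hQQ, if_pos rfl, div_self hm]
  · rw [hw]
    show dd (∑ j, (Q i j / m) • v j) z = 0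
    rw [dd_sum_left]
    apply Finset.sum_eq_zero
    intro j _
    rw [dd_smul_left, hz j, mul_zero]

lemma cancel_many (t : ℕ) : ∀ (k : ℕ) (v : Fin (k+t) → Fin (k+t) → ℚ),
    (∀ i j, i ≠ j → dd (v i) (v j) = 0) →
    (∀ i : Fin (k+t), (i:ℕ) < t → dd (v i) (v i) = 1) →
    ∃ w : Fin k → Fin k → ℚ, ∀ i j : Fin k,
      dd (w i) (w j) =
        dd (v ⟨(i:ℕ)+t, by omega⟩) (v ⟨(j:ℕ)+t, by omega⟩) := by
  induction t with
  | zero =>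
    intro k v hv1 _
    refine ⟨fun i => v ⟨(i:ℕ), by omega⟩, fun i j => ?_⟩
    rfl
  | succ t ih =>
    intro k v hv1 hv2
    obtain ⟨w', hw'⟩ := cancel (k := k + t) v hv1 (hv2 ⟨0, by omega⟩ (by simp))
    have hc1 : ∀ i j : Fin (k + t), i ≠ j → dd (w' i) (w' j) = 0 := by
      intro i j hij
      rw [hw']
      exact hv1 _ _ (fun hcon => hij (Fin.succ_injective _ hcon))
    have hc2 : ∀ i : Fin (k + t), (i:ℕ) < t → dd (w' i) (w' i) = 1 := by
      intro i hi
      rw [hw']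
      apply hv2
      simp only [Fin.val_succ]
      omega
    obtain ⟨w, hw⟩ := ih k w' hc1 hc2
    refine ⟨w, fun i j => ?_⟩
    rw [hw, hw']
    have hix : ∀ (i : Fin k) (h1 : (i:ℕ)+t < k+t) (h2 : (i:ℕ)+(t+1) < k+(t+1)),
        (⟨(i:ℕ)+t, h1⟩ : Fin (k+t)).succ = ⟨(i:ℕ)+(t+1), h2⟩ := by
      intro i h1 h2
      apply Fin.ext
      simp only [Fin.val_succ]
      omega
    rw [hix i _ _, hix j _ _]

end Stmt11

open Stmt11 in
theorem stmt_11 (d n : ℕ) (hd : 1 ≤ d) (hdn : d ≤ n) (m : ℕ) (hm : 0 < m)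
    (h : ∃ V : Fin (d + 4) → Fin (n + 4) → ℚ,
        (∀ i j, i ≠ j → ∑ k, V i k * V j k = 0) ∧
        (∀ i, ∑ k, V i k * V i k = (m : ℚ))) :
    ∃ W : Fin d → Fin n → ℚ,
        (∀ i j, i ≠ j → ∑ k, W i k * W j k = 0) ∧
        (∀ i, ∑ k, W i k * W i k = (m : ℚ)) := by
  obtain ⟨V, hVo, hVn⟩ := h
  have hVo' : ∀ i j, i ≠ j → dd (V i) (V j) = 0 := hVo
  have hVn' : ∀ i, dd (V i) (V i) = (m:ℚ) := hVn
  have hmQ : (m:ℚ) ≠ 0 := Nat.cast_ne_zero.mpr hm.ne'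
  obtain ⟨u, hu1, hu2, hu3⟩ := Stmt11.complete (n+4) (n-d) (d+4) (by omega) V hVo'
      (fun i => by rw [hVn' i]; exact hmQ)
  have hum : ∀ (i : Fin (n+4)), (i:ℕ) < d + 4 → dd (u i) (u i) = (m:ℚ) := by
    intro i hi
    have h3 : u i = V ⟨(i:ℕ), hi⟩ := hu3 ⟨(i:ℕ), hi⟩ i.isLt
    rw [h3, hVn']
  -- the first four vectors of u
  set v4 : Fin 4 → Fin (n+4) → ℚ := fun i => u ⟨(i:ℕ), by omega⟩ with hv4def
  have hv4o : ∀ i j, i ≠ j → dd (v4 i) (v4 j) = 0 := by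
    intro i j hij
    simp only [hv4def]
    apply hu1
    intro hc
    apply hij
    apply Fin.ext
    have h4 := congrArg Fin.val hc
    simpa using h4
  have hv4n : ∀ i, dd (v4 i) (v4 i) = (m:ℚ) := by
    intro i
    simp only [hv4def]
    apply hum
    show (i:ℕ) < d + 4
    omega
  obtain ⟨a, b, c, e4, habcd⟩ := Nat.sum_four_squares m
  have habcdQ : (a:ℚ)^2 + (b:ℚ)^2 + (c:ℚ)^2 + (e4:ℚ)^2 = (m:ℚ) := by exact_mod_cast habcd
  obtain ⟨w4, hw1, hw2, hw3⟩ := Stmt11.four_to_one (m:ℚ) hmQ _ _ _ _ habcdQ v4 hv4o hv4n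
  -- merged family: first four replaced by orthonormal vectors
  set U : Fin (n+4) → Fin (n+4) → ℚ :=
    fun i => if h4 : (i:ℕ) < 4 then w4 ⟨(i:ℕ), h4⟩ else u i with hUdef
  have hU1 : ∀ i j, i ≠ j → dd (U i) (U j) = 0 := by
    intro i j hij
    have hcross : ∀ (jj : Fin (n+4)), ¬ (jj:ℕ) < 4 → ∀ ii : Fin 4, dd (w4 ii) (u jj) = 0 := by
      intro jj hjj ii
      apply hw3
      intro j'
      simp only [hv4def]
      apply hu1
      intro hc
      apply hjj
      have h4 := congrArg Fin.val hc
      simp at h4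
      omega
    by_cases hi4 : (i:ℕ) < 4 <;> by_cases hj4 : (j:ℕ) < 4 <;>
      simp only [hUdef, dif_pos, dif_neg, hi4, hj4, dite_true, dite_false]
    · apply hw1
      intro hc
      apply hij
      apply Fin.ext
      have h4 := congrArg Fin.val hc
      simpa using h4
    · exact hcross j hj4 ⟨(i:ℕ), hi4⟩
    · rw [dd_comm]
      exact hcross i hi4 ⟨(j:ℕ), hj4⟩
    · exact hu1 i j hij
  have hUn1 : ∀ i : Fin (n+4), (i:ℕ) < 4 → dd (U i) (U i) = 1 := by
    intro i hi
    simp only [hUdef, dif_pos, hi, dite_true]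
    exact hw2 _
  have hUnm : ∀ i : Fin (n+4), 4 ≤ (i:ℕ) → (i:ℕ) < d+4 → dd (U i) (U i) = (m:ℚ) := by
    intro i hi1 hi2
    simp only [hUdef, dif_neg (by omega : ¬ (i:ℕ) < 4), dite_false]
    exact hum i hi2
  obtain ⟨z, hz⟩ := Stmt11.cancel_many 4 n U hU1 hUn1
  refine ⟨fun i => z ⟨(i:ℕ), by omega⟩, fun i j hij => ?_, fun i => ?_⟩
  · have h5 := hz ⟨(i:ℕ), by omega⟩ ⟨(j:ℕ), by omega⟩
    rw [hU1 _ _ ?_] at h5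
    · exact h5
    · intro hc
      apply hij
      apply Fin.ext
      have h6 := congrArg Fin.val hc
      simp at h6
      omega
  · have h5 := hz ⟨(i:ℕ), by omega⟩ ⟨(i:ℕ), by omega⟩
    rw [hUnm _ ?_ ?_] at h5
    · exact h5
    · show 4 ≤ (i:ℕ) + 4
      omega
    · show (i:ℕ) + 4 < d + 4
      have := i.isLt
      omega
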